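/- For every integer m ≥ 3 there is a constant C (depending only on m) such that for all positive integers q, ∑_{r=1}^{q} φ(gcd(q,r))^m ≤ C · φ(q)^m. -/

import Mathlib

open Finset

lemma aux_prod_lb (s : Finset ℕ) (hs : ∀ p ∈ s, 2 ≤ p) :
    ((s.card : ℚ) + 1)⁻¹ ≤ ∏ p ∈ s, (1 - (p : ℚ)⁻¹) := by
  induction s using Finset.strongInduction with
  | _ s ih =>
    rcases s.eq_empty_or_nonempty with rfl | hne
    · simp
    · have hMs : s.max' hne ∈ s := s.max'_mem hne
      set M := s.max' hne with hMdef
      have hsub : s ⊆ Finset.Icc 2 M := fun x hx =>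
        Finset.mem_Icc.mpr ⟨hs x hx, Finset.le_max' s x hx⟩
      have hcard : s.card + 1 ≤ M := by
        have h1 := Finset.card_le_card hsub
        rw [Nat.card_Icc] at h1
        have h2 : 2 ≤ M := hs M hMs
        omega
      have hk1 : 1 ≤ s.card := Finset.card_pos.mpr hne
      have hih := ih (s.erase M) (Finset.erase_ssubset hMs)
        (fun p hp => hs p (Finset.mem_of_mem_erase hp))
      rw [Finset.card_erase_of_mem hMs] at hih
      have hcardcast : ((s.card - 1 : ℕ) : ℚ) + 1 = (s.card : ℚ) := by
        have : (s.card - 1) + 1 = s.card := by omega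
        exact_mod_cast congrArg (Nat.cast (R := ℚ)) this
      rw [hcardcast] at hih
      have hkpos : (0:ℚ) < (s.card : ℚ) := by exact_mod_cast hk1
      have hMpos : (0:ℚ) < (M:ℚ) := by
        have := hs M hMs; positivity
      have hMinv : (M:ℚ)⁻¹ ≤ ((s.card : ℚ) + 1)⁻¹ := by
        apply inv_anti₀ (by positivity)
        exact_mod_cast hcard
      have hfac : (0:ℚ) ≤ 1 - (M:ℚ)⁻¹ := by
        have : (M:ℚ)⁻¹ ≤ 1 := by
          rw [inv_le_one_iff₀]; right; exact_mod_cast Nat.one_le_iff_ne_zero.mpr (by omega)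
        linarith
      calc ((s.card : ℚ) + 1)⁻¹
          = (1 - ((s.card : ℚ) + 1)⁻¹) * (s.card : ℚ)⁻¹ := by
            field_simp; ring
        _ ≤ (1 - (M:ℚ)⁻¹) * (s.card : ℚ)⁻¹ := by
            apply mul_le_mul_of_nonneg_right (by linarith) (by positivity)
        _ ≤ (1 - (M:ℚ)⁻¹) * ∏ p ∈ s.erase M, (1 - (p : ℚ)⁻¹) :=
            mul_le_mul_of_nonneg_left hih hfac
        _ = ∏ p ∈ s, (1 - (p : ℚ)⁻¹) := Finset.mul_prod_erase s (fun p => 1 - (p : ℚ)⁻¹) hMs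

lemma aux_n_le (n : ℕ) : n ≤ (n.primeFactors.card + 1) * n.totient := by
  rcases Nat.eq_zero_or_pos n with rfl | hn
  · simp
  have h1 := Nat.totient_eq_mul_prod_factors n
  have h2 := aux_prod_lb n.primeFactors (fun p hp => (Nat.prime_of_mem_primeFactors hp).two_le)
  have hc : (0:ℚ) < (n.primeFactors.card : ℚ) + 1 := by positivity
  have hQ : (n : ℚ) ≤ ((n.primeFactors.card : ℚ) + 1) * n.totient := by
    rw [h1]
    have hone : (1:ℚ) ≤ ((n.primeFactors.card : ℚ) + 1) * ∏ p ∈ n.primeFactors, (1 - (p : ℚ)⁻¹) := by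
      calc (1:ℚ) = ((n.primeFactors.card : ℚ) + 1) * ((n.primeFactors.card : ℚ) + 1)⁻¹ :=
            (mul_inv_cancel₀ hc.ne').symm
        _ ≤ _ := mul_le_mul_of_nonneg_left h2 hc.le
    calc (n:ℚ) = (n:ℚ) * 1 := (mul_one _).symm
      _ ≤ (n:ℚ) * (((n.primeFactors.card : ℚ) + 1) * ∏ p ∈ n.primeFactors, (1 - (p : ℚ)⁻¹)) :=
          mul_le_mul_of_nonneg_left hone (by positivity)
      _ = ((n.primeFactors.card : ℚ) + 1) * ((n:ℚ) * ∏ p ∈ n.primeFactors, (1 - (p : ℚ)⁻¹)) := by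
          ring
  exact_mod_cast hQ

lemma aux_two_pow (n : ℕ) (hn : 0 < n) : 2 ^ n.primeFactors.card ≤ n := by
  calc 2 ^ n.primeFactors.card ≤ ∏ p ∈ n.primeFactors, p :=
        Finset.pow_card_le_prod _ _ _ (fun p hp => (Nat.prime_of_mem_primeFactors hp).two_le)
    _ ≤ n := Nat.le_of_dvd hn (Nat.prod_primeFactors_dvd n)

lemma aux_pow6 (k : ℕ) : (k + 1) ^ 6 ≤ 2116 * 2 ^ k := by
  induction k with
  | zero => norm_num
  | succ n ih =>
    rcases lt_or_ge n 8 with h | h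
    · interval_cases n <;> norm_num
    · have h9 : 9 * (n + 2) ≤ 10 * (n + 1) := by omega
      have h6 : (9 * (n + 2)) ^ 6 ≤ (10 * (n + 1)) ^ 6 := Nat.pow_le_pow_left h9 6
      have h7 : 531441 * (n + 2) ^ 6 ≤ 1000000 * (n + 1) ^ 6 := by
        calc 531441 * (n + 2) ^ 6 = (9 * (n + 2)) ^ 6 := by ring
          _ ≤ (10 * (n + 1)) ^ 6 := h6
          _ = 1000000 * (n + 1) ^ 6 := by ring
      have h8 : (n + 2) ^ 6 ≤ 2 * (n + 1) ^ 6 := by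
        have h8' : 531441 * (n + 2) ^ 6 ≤ 531441 * (2 * (n + 1) ^ 6) := by
          calc 531441 * (n + 2) ^ 6 ≤ 1000000 * (n + 1) ^ 6 := h7
            _ ≤ 1062882 * (n + 1) ^ 6 := Nat.mul_le_mul_right _ (by norm_num)
            _ = 531441 * (2 * (n + 1) ^ 6) := by ring
        exact Nat.le_of_mul_le_mul_left h8' (by norm_num)
      calc (n + 1 + 1) ^ 6 = (n + 2) ^ 6 := by ring
        _ ≤ 2 * (n + 1) ^ 6 := h8
        _ ≤ 2 * (2116 * 2 ^ n) := by omega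
        _ = 2116 * 2 ^ (n + 1) := by ring

lemma aux_key (m : ℕ) (hm : 3 ≤ m) (e : ℕ) (he : 1 ≤ e) :
    (e : ℝ) * (((e.totient : ℝ)) ^ m)⁻¹ ≤ 46 * Real.sqrt e / (e : ℝ) ^ 2 := by
  have hepos : (0:ℝ) < e := by exact_mod_cast he
  have hP : 1 ≤ e.totient := Nat.totient_pos.mpr he
  have hPpos : (0:ℝ) < (e.totient : ℝ) := by exact_mod_cast hP
  set w := e.primeFactors.card with hw
  -- (w+1)^6 ≤ 2116 * e  in ℕ
  have h6 : (w + 1) ^ 6 ≤ 2116 * e :=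
    (aux_pow6 w).trans (Nat.mul_le_mul_left _ (aux_two_pow e he))
  have h6R : ((w : ℝ) + 1) ^ 6 ≤ 2116 * (e : ℝ) := by exact_mod_cast h6
  have h4 : ((w : ℝ) + 1) ^ 3 ≤ 46 * Real.sqrt e := by
    have h46 : (46 : ℝ) * Real.sqrt e = Real.sqrt (2116 * e) := by
      rw [Real.sqrt_mul (by norm_num), show Real.sqrt 2116 = 46 by
        rw [show (2116:ℝ) = 46 ^ 2 by norm_num, Real.sqrt_sq (by norm_num)]]
    rw [h46, Real.le_sqrt (by positivity) (by positivity)]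
    calc (((w : ℝ) + 1) ^ 3) ^ 2 = ((w : ℝ) + 1) ^ 6 := by ring
      _ ≤ 2116 * (e : ℝ) := h6R
  have h1 : (e : ℝ) ≤ ((w : ℝ) + 1) * (e.totient : ℝ) := by exact_mod_cast aux_n_le e
  have h3 : (e : ℝ) ^ 3 ≤ ((w : ℝ) + 1) ^ 3 * (e.totient : ℝ) ^ 3 := by
    rw [← mul_pow]; exact pow_le_pow_left₀ hepos.le h1 3
  have hPm : (e.totient : ℝ) ^ 3 ≤ (e.totient : ℝ) ^ m :=
    pow_le_pow_right₀ (by exact_mod_cast hP) hm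
  rw [div_eq_mul_inv, ← div_eq_mul_inv, ← div_eq_mul_inv,
    div_le_div_iff₀ (by positivity) (by positivity)]
  calc (e : ℝ) * (e : ℝ) ^ 2 = (e : ℝ) ^ 3 := by ring
    _ ≤ ((w : ℝ) + 1) ^ 3 * (e.totient : ℝ) ^ 3 := h3
    _ ≤ (46 * Real.sqrt e) * (e.totient : ℝ) ^ 3 :=
        mul_le_mul_of_nonneg_right h4 (by positivity)
    _ ≤ (46 * Real.sqrt e) * (e.totient : ℝ) ^ m :=
        mul_le_mul_of_nonneg_left hPm (by positivity)

theorem stmt4 (m : ℕ) (hm : 3 ≤ m) :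
    ∃ C : ℝ, 0 < C ∧ ∀ q : ℕ, 0 < q →
      (∑ r ∈ Finset.Icc 1 q, (Nat.totient (Nat.gcd q r) : ℝ) ^ m) ≤
        C * (Nat.totient q : ℝ) ^ m := by
  have hsum : Summable (fun n : ℕ => ((n : ℝ) ^ ((3:ℝ)/2))⁻¹) :=
    Real.summable_nat_rpow_inv.mpr (by norm_num)
  set T := ∑' n : ℕ, ((n : ℝ) ^ ((3:ℝ)/2))⁻¹ with hTdef
  have hT0 : 0 ≤ T := tsum_nonneg fun n => by positivity
  refine ⟨46 * T + 1, by positivity, fun q hq => ?_⟩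
  have hqR : (0:ℝ) < q := by exact_mod_cast hq
  -- Step 1 : pointwise bound
  have hstep1 : ∀ r ∈ Finset.Icc 1 q, (Nat.totient (Nat.gcd q r) : ℝ) ^ m ≤
      (Nat.totient q : ℝ) ^ m * ((Nat.totient (q / Nat.gcd q r) : ℝ) ^ m)⁻¹ := by
    intro r hr
    have hg : Nat.gcd q r ∣ q := Nat.gcd_dvd_left q r
    have hgpos : 0 < Nat.gcd q r := Nat.gcd_pos_of_pos_left _ hq
    have hepos : 0 < q / Nat.gcd q r := Nat.div_pos (Nat.le_of_dvd hq hg) hgpos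
    have htpos : 0 < Nat.totient (q / Nat.gcd q r) := Nat.totient_pos.mpr hepos
    have hsup : Nat.totient (Nat.gcd q r) * Nat.totient (q / Nat.gcd q r) ≤ Nat.totient q := by
      calc Nat.totient (Nat.gcd q r) * Nat.totient (q / Nat.gcd q r)
          ≤ Nat.totient (Nat.gcd q r * (q / Nat.gcd q r)) := Nat.totient_super_multiplicative _ _
        _ = Nat.totient q := by rw [Nat.mul_div_cancel' hg]
    have hR : (Nat.totient (Nat.gcd q r) : ℝ) * (Nat.totient (q / Nat.gcd q r) : ℝ)
        ≤ (Nat.totient q : ℝ) := by exact_mod_cast hsup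
    have hpow : (Nat.totient (Nat.gcd q r) : ℝ) ^ m * (Nat.totient (q / Nat.gcd q r) : ℝ) ^ m
        ≤ (Nat.totient q : ℝ) ^ m := by
      rw [← mul_pow]; exact pow_le_pow_left₀ (by positivity) hR m
    have htposR : (0:ℝ) < (Nat.totient (q / Nat.gcd q r) : ℝ) ^ m := by
      have : (0:ℝ) < (Nat.totient (q / Nat.gcd q r) : ℝ) := by exact_mod_cast htpos
      positivity
    exact (le_mul_inv_iff₀ htposR).mpr hpow
  -- Step 2 : fiberwise bound
  have hmaps : ∀ r ∈ Finset.Icc 1 q, q / Nat.gcd q r ∈ q.divisors := by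
    intro r hr
    exact Nat.mem_divisors.mpr ⟨Nat.div_dvd_of_dvd (Nat.gcd_dvd_left q r), hq.ne'⟩
  have hfib := Finset.sum_fiberwise_of_maps_to hmaps
    (fun r => ((Nat.totient (q / Nat.gcd q r) : ℝ) ^ m)⁻¹)
  have hstep3 : ∑ r ∈ Finset.Icc 1 q, ((Nat.totient (q / Nat.gcd q r) : ℝ) ^ m)⁻¹
      ≤ ∑ e ∈ q.divisors, (e : ℝ) * ((Nat.totient e : ℝ) ^ m)⁻¹ := by
    rw [← hfib]
    apply Finset.sum_le_sum
    intro e he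
    obtain ⟨hedvd, -⟩ := Nat.mem_divisors.mp he
    have hepos : 0 < e := Nat.pos_of_mem_divisors he
    have hinner : ∀ r ∈ (Finset.Icc 1 q).filter (fun r => q / Nat.gcd q r = e),
        ((Nat.totient (q / Nat.gcd q r) : ℝ) ^ m)⁻¹ = ((Nat.totient e : ℝ) ^ m)⁻¹ := by
      intro r hr
      rw [(Finset.mem_filter.mp hr).2]
    rw [Finset.sum_congr rfl hinner, Finset.sum_const, nsmul_eq_mul]
    apply mul_le_mul_of_nonneg_right _ (by positivity)
    -- card bound
    have hsubset : (Finset.Icc 1 q).filter (fun r => q / Nat.gcd q r = e)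
        ⊆ (Finset.Ioc 0 q).filter (fun r => (q / e) ∣ r) := by
      intro r hr
      obtain ⟨hr1, hr2⟩ := Finset.mem_filter.mp hr
      refine Finset.mem_filter.mpr ⟨by simpa [← Finset.Icc_add_one_left_eq_Ioc] using hr1, ?_⟩
      have hgd : Nat.gcd q r = q / e := by
        rw [← hr2, Nat.div_div_self (Nat.gcd_dvd_left q r) hq.ne']
      rw [← hgd]
      exact Nat.gcd_dvd_right q r
    have hcard : ((Finset.Icc 1 q).filter (fun r => q / Nat.gcd q r = e)).card ≤ e := by
      calc ((Finset.Icc 1 q).filter (fun r => q / Nat.gcd q r = e)).card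
          ≤ ((Finset.Ioc 0 q).filter (fun r => (q / e) ∣ r)).card := Finset.card_le_card hsubset
        _ = q / (q / e) := Nat.Ioc_filter_dvd_card_eq_div q (q / e)
        _ = e := Nat.div_div_self hedvd hq.ne'
    exact_mod_cast hcard
  -- Step 4 : divisor sum bound
  have hstep4 : ∑ e ∈ q.divisors, (e : ℝ) * ((Nat.totient e : ℝ) ^ m)⁻¹ ≤ 46 * T := by
    have hdivsub : q.divisors ⊆ Finset.Icc 1 q := by
      intro e he
      exact Finset.mem_Icc.mpr ⟨Nat.pos_of_mem_divisors he,
        Nat.le_of_dvd hq (Nat.mem_divisors.mp he).1⟩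
    calc ∑ e ∈ q.divisors, (e : ℝ) * ((Nat.totient e : ℝ) ^ m)⁻¹
        ≤ ∑ e ∈ q.divisors, 46 * ((e : ℝ) ^ ((3:ℝ)/2))⁻¹ := by
          apply Finset.sum_le_sum
          intro e he
          have hepos : 0 < e := Nat.pos_of_mem_divisors he
          have heR : (0:ℝ) < e := by exact_mod_cast hepos
          have hkey := aux_key m hm e hepos
          have heq : 46 * Real.sqrt e / (e : ℝ) ^ 2 = 46 * ((e : ℝ) ^ ((3:ℝ)/2))⁻¹ := by
            rw [Real.sqrt_eq_rpow, show ((e:ℝ)^2) = (e:ℝ) ^ ((2:ℝ)) by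
                rw [← Real.rpow_natCast (e:ℝ) 2]; norm_num,
              mul_div_assoc, ← Real.rpow_sub heR, ← Real.rpow_neg heR.le]
            norm_num
          rw [← heq]; exact hkey
      _ ≤ ∑ e ∈ Finset.Icc 1 q, 46 * ((e : ℝ) ^ ((3:ℝ)/2))⁻¹ := by
          apply Finset.sum_le_sum_of_subset_of_nonneg hdivsub
          intro e _ _; positivity
      _ = 46 * ∑ e ∈ Finset.Icc 1 q, ((e : ℝ) ^ ((3:ℝ)/2))⁻¹ := by rw [Finset.mul_sum]
      _ ≤ 46 * T := by
          apply mul_le_mul_of_nonneg_left _ (by norm_num)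
          exact Summable.sum_le_tsum _ (fun i _ => by positivity) hsum
  -- assemble
  calc ∑ r ∈ Finset.Icc 1 q, (Nat.totient (Nat.gcd q r) : ℝ) ^ m
      ≤ ∑ r ∈ Finset.Icc 1 q, (Nat.totient q : ℝ) ^ m *
          ((Nat.totient (q / Nat.gcd q r) : ℝ) ^ m)⁻¹ := Finset.sum_le_sum hstep1
    _ = (Nat.totient q : ℝ) ^ m * ∑ r ∈ Finset.Icc 1 q,
          ((Nat.totient (q / Nat.gcd q r) : ℝ) ^ m)⁻¹ := by rw [Finset.mul_sum]
    _ ≤ (Nat.totient q : ℝ) ^ m * (46 * T) := by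
        apply mul_le_mul_of_nonneg_left (hstep3.trans hstep4) (by positivity)
    _ ≤ (46 * T + 1) * (Nat.totient q : ℝ) ^ m := by
        rw [mul_comm]
        apply mul_le_mul_of_nonneg_right (by linarith) (by positivity)
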